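/- Let A be positive semidefinite and T an operator admitting an A-adjoint T^♯. Then (1/2)[w_A(T + T^♯T)² + c_A(T − T^♯T)²] ≤ dw_A(T)² ≤ (1/2)[w_A(T + T^♯T)² + w_A(T − T^♯T)²]. -/

import Mathlib

noncomputable section

namespace DW

variable {H : Type*} [NormedAddCommGroup H] [InnerProductSpace ℂ H]

/-- The semi-inner ℂ product induced by `A`: `⟨x,y⟩_A = ⟨Ax, y⟩`. -/
def innA (A : H →L[ℂ] H) (x y : H) : ℂ := inner ℂ (A x) y

/-- The seminorm induced by `A`. -/
def normA (A : H →L[ℂ] H) (x : H) : ℝ := Real.sqrt (innA A x x).re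

/-- `T` is `A`-bounded. -/
def IsABounded (A T : H →L[ℂ] H) : Prop := ∃ c > 0, ∀ x, normA A (T x) ≤ c * normA A x

/-- `S` is an `A`-adjoint of `T`. -/
def IsAAdjointPair (A T S : H →L[ℂ] H) : Prop := ∀ x y, innA A (T x) y = innA A x (S y)

/-- The `A`-operator seminorm. -/
def opNormA (A T : H →L[ℂ] H) : ℝ := sSup {r | ∃ x, normA A x = 1 ∧ r = normA A (T x)}

/-- The `A`-minimum modulus. -/
def mA (A T : H →L[ℂ] H) : ℝ := sInf {r | ∃ x, normA A x = 1 ∧ r = normA A (T x)}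

/-- The `A`-numerical radius. -/
def wA (A T : H →L[ℂ] H) : ℝ :=
  sSup {r | ∃ x, normA A x = 1 ∧ r = ‖innA A (T x) x‖}

/-- The `A`-Crawford number. -/
def cA (A T : H →L[ℂ] H) : ℝ :=
  sInf {r | ∃ x, normA A x = 1 ∧ r = ‖innA A (T x) x‖}

/-- The `A`-Davis-Wielandt radius. -/
def dwA (A T : H →L[ℂ] H) : ℝ :=
  sSup {r | ∃ x, normA A x = 1 ∧
    r = Real.sqrt (‖innA A (T x) x‖ ^ 2 + normA A (T x) ^ 4)}

/-- The semi-inner ℂ product on `H ⊕ H` induced by `𝔸 = diag(A,A)`. -/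
def innA2 (A : H →L[ℂ] H) (z w : H × H) : ℂ := innA A z.1 w.1 + innA A z.2 w.2

/-- The seminorm on `H ⊕ H` induced by `𝔸 = diag(A,A)`. -/
def normA2 (A : H →L[ℂ] H) (z : H × H) : ℝ := Real.sqrt (innA2 A z z).re

/-- The `𝔸`-numerical radius on `H ⊕ H`, `𝔸 = diag(A,A)`. -/
def wA2 (A : H →L[ℂ] H) (T : H × H →L[ℂ] H × H) : ℝ :=
  sSup {r | ∃ z, normA2 A z = 1 ∧ r = ‖innA2 A (T z) z‖}

/-- The `𝔸`-Davis-Wielandt radius on `H ⊕ H`, `𝔸 = diag(A,A)`. -/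
def dwA2 (A : H →L[ℂ] H) (T : H × H →L[ℂ] H × H) : ℝ :=
  sSup {r | ∃ z, normA2 A z = 1 ∧
    r = Real.sqrt (‖innA2 A (T z) z‖ ^ 2 + normA2 A (T z) ^ 4)}

/-- The block operator `[[0, X], [Y, 0]]` on `H ⊕ H`. -/
def offDiag (X Y : H →L[ℂ] H) : H × H →L[ℂ] H × H :=
  (X.comp (ContinuousLinearMap.snd ℂ H H)).prod (Y.comp (ContinuousLinearMap.fst ℂ H H))

end DW

open DW

variable {H : Type*} [NormedAddCommGroup H] [InnerProductSpace ℂ H] [CompleteSpace H]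

private lemma dw_pow_two_pow_le {a b C : ℝ} (ha : 0 ≤ a) (hb : 0 ≤ b)
    (h : ∀ n : ℕ, a ^ 2 ^ n ≤ C * b ^ 2 ^ n) : a ≤ b := by
  by_contra hab
  push_neg at hab
  rcases eq_or_lt_of_le hb with hb0 | hb0
  · have h0 := h 0
    rw [pow_zero, pow_one, pow_one, ← hb0, mul_zero] at h0
    linarith
  · have ht : 1 < a / b := (one_lt_div hb0).mpr hab
    obtain ⟨n, hn⟩ := pow_unbounded_of_one_lt C ht
    have h2 : (a / b) ^ n ≤ (a / b) ^ 2 ^ n :=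
      pow_le_pow_right₀ ht.le (Nat.lt_two_pow_self (n := n)).le
    have h3 : (a / b) ^ 2 ^ n ≤ C := by
      rw [div_pow, div_le_iff₀ (pow_pos hb0 _)]
      exact h n
    linarith

private lemma dw_abs_identity (z : ℂ) (r : ℝ) :
    ‖z + (r : ℂ)‖ ^ 2 + ‖z - (r : ℂ)‖ ^ 2
      = 2 * (‖z‖ ^ 2 + r ^ 2) := by
  simp only [Complex.sq_norm, Complex.normSq_apply, Complex.add_re, Complex.add_im,
    Complex.sub_re, Complex.sub_im, Complex.ofReal_re, Complex.ofReal_im]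
  ring


theorem stmt7 (A T T' : H →L[ℂ] H) (hA : A.IsPositive) (hT' : IsAAdjointPair A T T') :
    (1 / 2) * (wA A (T + T'.comp T) ^ 2 + cA A (T - T'.comp T) ^ 2) ≤ dwA A T ^ 2 ∧
      dwA A T ^ 2 ≤ (1 / 2) * (wA A (T + T'.comp T) ^ 2 + wA A (T - T'.comp T) ^ 2) := by
  classical
  obtain ⟨B, hBpos, hBB⟩ : ∃ B : H →L[ℂ] H, B.IsPositive ∧ B.comp B = A := by
    have h0 : 0 ≤ A := (ContinuousLinearMap.nonneg_iff_isPositive A).mpr hA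
    exact ⟨CFC.sqrt A, (ContinuousLinearMap.nonneg_iff_isPositive _).mp (CFC.sqrt_nonneg A),
      CFC.sqrt_mul_sqrt_self A h0⟩
  have hBsym : ∀ u v : H, (inner ℂ (B u) v : ℂ) = inner ℂ u (B v) :=
    fun u v => (ContinuousLinearMap.isSelfAdjoint_iff_isSymmetric.mp hBpos.isSelfAdjoint) u v
  have hinn : ∀ u v : H, innA A u v = (inner ℂ (B u) (B v) : ℂ) := by
    intro u v
    simp only [innA, ← hBB, ContinuousLinearMap.comp_apply]
    exact hBsym (B u) v
  have hsqK : ∀ w : H, (inner ℂ (B w) (B w) : ℂ) = ((‖B w‖ ^ 2 : ℝ) : ℂ) := by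
    intro w
    rw [inner_self_eq_norm_sq_to_K]
    norm_cast
  have hsq : ∀ w : H, Complex.re (inner ℂ (B w) (B w) : ℂ) = ‖B w‖ ^ 2 := by
    intro w
    rw [hsqK, Complex.ofReal_re]
  have hnorm : ∀ u : H, normA A u = ‖B u‖ := by
    intro u
    simp only [normA, hinn, hsq]
    exact Real.sqrt_sq (norm_nonneg _)
  set R := T'.comp T with hRdef
  have hT'B : ∀ u v : H, (inner ℂ (B (T u)) (B v) : ℂ) = inner ℂ (B u) (B (T' v)) := by
    intro u v
    have := hT' u v
    rwa [hinn, hinn] at this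
  have hT'adj : ∀ u v : H, (inner ℂ (B (T' u)) (B v) : ℂ) = inner ℂ (B u) (B (T v)) := by
    intro u v
    calc (inner ℂ (B (T' u)) (B v) : ℂ)
        = starRingEnd ℂ (inner ℂ (B v) (B (T' u))) := (inner_conj_symm _ _).symm
      _ = starRingEnd ℂ (inner ℂ (B (T v)) (B u)) := by rw [hT'B v u]
      _ = inner ℂ (B u) (B (T v)) := inner_conj_symm _ _
  have hRapp : ∀ u : H, R u = T' (T u) := fun u => rfl
  have hR : ∀ u v : H, (inner ℂ (B (R u)) (B v) : ℂ) = inner ℂ (B u) (B (R v)) := by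
    intro u v
    rw [hRapp, hRapp, hT'adj (T u) v, hT'B u (T v)]
  have hRn : ∀ (n : ℕ) (u v : H),
      (inner ℂ (B ((R ^ n) u)) (B v) : ℂ) = inner ℂ (B u) (B ((R ^ n) v)) := by
    intro n
    induction n with
    | zero => intro u v; simp
    | succ n ih =>
      intro u v
      have e1 : (R ^ (n + 1)) u = (R ^ n) (R u) := by
        rw [pow_succ, ContinuousLinearMap.mul_apply]
      have e2 : (R ^ (n + 1)) v = R ((R ^ n) v) := by
        rw [pow_succ', ContinuousLinearMap.mul_apply]
      rw [e1, ih (R u) v, hR u ((R ^ n) v), e2]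
  have hRbound : ∀ u : H, ‖B u‖ = 1 → ‖B (R u)‖ ≤ ‖R‖ := by
    intro u hu
    have key : ∀ m : ℕ, ‖B (R u)‖ ^ 2 ^ m ≤ ‖B ((R ^ 2 ^ m) u)‖ := by
      intro m
      induction m with
      | zero => simp
      | succ m ih =>
        have h1 : ‖B (R u)‖ ^ 2 ^ (m + 1) = (‖B (R u)‖ ^ 2 ^ m) ^ 2 := by
          rw [← pow_mul, pow_succ]
        have h2 : (‖B (R u)‖ ^ 2 ^ m) ^ 2 ≤ ‖B ((R ^ 2 ^ m) u)‖ ^ 2 :=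
          pow_le_pow_left₀ (by positivity) ih 2
        have e : (inner ℂ (B ((R ^ 2 ^ m) u)) (B ((R ^ 2 ^ m) u)) : ℂ)
            = inner ℂ (B u) (B ((R ^ 2 ^ (m + 1)) u)) := by
          rw [hRn (2 ^ m) u ((R ^ 2 ^ m) u)]
          congr 2
          rw [← ContinuousLinearMap.mul_apply, ← pow_add]
          congr 1
          rw [pow_succ, mul_two]
        have h3 : ‖B ((R ^ 2 ^ m) u)‖ ^ 2 ≤ ‖B ((R ^ 2 ^ (m + 1)) u)‖ := by
          calc ‖B ((R ^ 2 ^ m) u)‖ ^ 2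
              = Complex.re (inner ℂ (B ((R ^ 2 ^ m) u)) (B ((R ^ 2 ^ m) u))) := (hsq _).symm
            _ = Complex.re (inner ℂ (B u) (B ((R ^ 2 ^ (m + 1)) u))) := by rw [e]
            _ ≤ ‖inner ℂ (B u) (B ((R ^ 2 ^ (m + 1)) u))‖ := Complex.re_le_norm _
            _ = ‖(inner ℂ (B u) (B ((R ^ 2 ^ (m + 1)) u)) : ℂ)‖ :=
                rfl
            _ ≤ ‖B u‖ * ‖B ((R ^ 2 ^ (m + 1)) u)‖ := norm_inner_le_norm _ _
            _ = ‖B ((R ^ 2 ^ (m + 1)) u)‖ := by rw [hu, one_mul]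
        rw [h1]
        exact h2.trans h3
    refine dw_pow_two_pow_le (norm_nonneg _) (norm_nonneg _) (C := ‖B‖ * ‖u‖) ?_
    intro n
    calc ‖B (R u)‖ ^ 2 ^ n ≤ ‖B ((R ^ 2 ^ n) u)‖ := key n
      _ ≤ ‖B‖ * ‖(R ^ 2 ^ n) u‖ := B.le_opNorm _
      _ ≤ ‖B‖ * (‖R ^ 2 ^ n‖ * ‖u‖) := by
          gcongr
          exact (R ^ 2 ^ n).le_opNorm u
      _ ≤ ‖B‖ * (‖R‖ ^ 2 ^ n * ‖u‖) := by
          gcongr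
          exact norm_pow_le' R (Nat.pow_pos (by norm_num))
      _ = ‖B‖ * ‖u‖ * ‖R‖ ^ 2 ^ n := by ring
  have hTbound : ∀ u : H, ‖B u‖ = 1 → ‖B (T u)‖ ≤ Real.sqrt ‖R‖ := by
    intro u hu
    have h1 : ‖B (T u)‖ ^ 2 ≤ ‖R‖ := by
      calc ‖B (T u)‖ ^ 2
          = Complex.re (inner ℂ (B (T u)) (B (T u))) := (hsq _).symm
        _ = Complex.re (inner ℂ (B u) (B (R u))) := by rw [hT'B u (T u), hRapp]
        _ ≤ ‖inner ℂ (B u) (B (R u))‖ := Complex.re_le_norm _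
        _ = ‖(inner ℂ (B u) (B (R u)) : ℂ)‖ := rfl
        _ ≤ ‖B u‖ * ‖B (R u)‖ := norm_inner_le_norm _ _
        _ = ‖B (R u)‖ := by rw [hu, one_mul]
        _ ≤ ‖R‖ := hRbound u hu
    calc ‖B (T u)‖ = Real.sqrt (‖B (T u)‖ ^ 2) := (Real.sqrt_sq (norm_nonneg _)).symm
      _ ≤ Real.sqrt ‖R‖ := Real.sqrt_le_sqrt h1
  have hRinner : ∀ u : H,
      (inner ℂ (B (R u)) (B u) : ℂ) = ((‖B (T u)‖ ^ 2 : ℝ) : ℂ) := by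
    intro u
    rw [hRapp, hT'adj (T u) u, hsqK]
  have hid : ∀ u : H, normA A u = 1 →
      ‖innA A ((T + R) u) u‖ ^ 2 + ‖innA A ((T - R) u) u‖ ^ 2
        = 2 * (‖innA A (T u) u‖ ^ 2 + normA A (T u) ^ 4) := by
    intro u hu
    rw [hinn, hinn, hinn, hnorm, ContinuousLinearMap.add_apply,
      ContinuousLinearMap.sub_apply, map_add, map_sub, inner_add_left, inner_sub_left,
      hRinner u, dw_abs_identity]
    ring
  -- bounds on the sets
  have habsP : ∀ u : H, normA A u = 1 →
      ‖innA A ((T + R) u) u‖ ≤ Real.sqrt ‖R‖ + ‖R‖ := by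
    intro u hu
    rw [hnorm] at hu
    rw [hinn]
    calc ‖(inner ℂ (B ((T + R) u)) (B u) : ℂ)‖
        ≤ ‖B ((T + R) u)‖ * ‖B u‖ := norm_inner_le_norm _ _
      _ = ‖B (T u) + B (R u)‖ := by
          rw [hu, mul_one, ContinuousLinearMap.add_apply, map_add]
      _ ≤ ‖B (T u)‖ + ‖B (R u)‖ := norm_add_le _ _
      _ ≤ Real.sqrt ‖R‖ + ‖R‖ := add_le_add (hTbound u hu) (hRbound u hu)
  have habsM : ∀ u : H, normA A u = 1 →
      ‖innA A ((T - R) u) u‖ ≤ Real.sqrt ‖R‖ + ‖R‖ := by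
    intro u hu
    rw [hnorm] at hu
    rw [hinn]
    calc ‖(inner ℂ (B ((T - R) u)) (B u) : ℂ)‖
        ≤ ‖B ((T - R) u)‖ * ‖B u‖ := norm_inner_le_norm _ _
      _ = ‖B (T u) - B (R u)‖ := by
          rw [hu, mul_one, ContinuousLinearMap.sub_apply, map_sub]
      _ ≤ ‖B (T u)‖ + ‖B (R u)‖ := norm_sub_le _ _
      _ ≤ Real.sqrt ‖R‖ + ‖R‖ := add_le_add (hTbound u hu) (hRbound u hu)
  have habsT : ∀ u : H, normA A u = 1 →
      ‖innA A (T u) u‖ ≤ Real.sqrt ‖R‖ := by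
    intro u hu
    rw [hnorm] at hu
    rw [hinn]
    calc ‖(inner ℂ (B (T u)) (B u) : ℂ)‖
        ≤ ‖B (T u)‖ * ‖B u‖ := norm_inner_le_norm _ _
      _ = ‖B (T u)‖ := by rw [hu, mul_one]
      _ ≤ Real.sqrt ‖R‖ := hTbound u hu
  have hnormT : ∀ u : H, normA A u = 1 → normA A (T u) ≤ Real.sqrt ‖R‖ := by
    intro u hu
    rw [hnorm]
    rw [hnorm] at hu
    exact hTbound u hu
  -- bdd above of the three sets
  have hBddP : BddAbove {r : ℝ | ∃ x, normA A x = 1 ∧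
      r = ‖innA A ((T + R) x) x‖} := by
    refine ⟨Real.sqrt ‖R‖ + ‖R‖, ?_⟩
    rintro r ⟨x, hx, rfl⟩
    exact habsP x hx
  have hBddM : BddAbove {r : ℝ | ∃ x, normA A x = 1 ∧
      r = ‖innA A ((T - R) x) x‖} := by
    refine ⟨Real.sqrt ‖R‖ + ‖R‖, ?_⟩
    rintro r ⟨x, hx, rfl⟩
    exact habsM x hx
  have hBddD : BddAbove {r : ℝ | ∃ x, normA A x = 1 ∧
      r = Real.sqrt (‖innA A (T x) x‖ ^ 2 + normA A (T x) ^ 4)} := by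
    refine ⟨Real.sqrt (‖R‖ + ‖R‖ ^ 2), ?_⟩
    rintro r ⟨x, hx, rfl⟩
    apply Real.sqrt_le_sqrt
    have h1 := habsT x hx
    have h2 := hnormT x hx
    have h3 : ‖innA A (T x) x‖ ^ 2 ≤ Real.sqrt ‖R‖ ^ 2 :=
      pow_le_pow_left₀ (norm_nonneg _) h1 2
    have h4 : normA A (T x) ^ 4 ≤ Real.sqrt ‖R‖ ^ 4 :=
      pow_le_pow_left₀ (by rw [hnorm]; exact norm_nonneg _) h2 4
    have h5 : Real.sqrt ‖R‖ ^ 2 = ‖R‖ := Real.sq_sqrt (norm_nonneg _)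
    have h6 : Real.sqrt ‖R‖ ^ 4 = ‖R‖ ^ 2 := by
      rw [show (4 : ℕ) = 2 * 2 from rfl, pow_mul, h5]
    linarith
  have hBelowM : BddBelow {r : ℝ | ∃ x, normA A x = 1 ∧
      r = ‖innA A ((T - R) x) x‖} := by
    refine ⟨0, ?_⟩
    rintro r ⟨x, hx, rfl⟩
    exact norm_nonneg _
  -- nonnegativity of the four quantities
  have hwp0 : 0 ≤ wA A (T + R) := by
    apply Real.sSup_nonneg
    rintro r ⟨x, hx, rfl⟩
    exact norm_nonneg _
  have hwm0 : 0 ≤ wA A (T - R) := by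
    apply Real.sSup_nonneg
    rintro r ⟨x, hx, rfl⟩
    exact norm_nonneg _
  have hc0 : 0 ≤ cA A (T - R) := by
    apply Real.sInf_nonneg
    rintro r ⟨x, hx, rfl⟩
    exact norm_nonneg _
  have hd0 : 0 ≤ dwA A T := by
    apply Real.sSup_nonneg
    rintro r ⟨x, hx, rfl⟩
    exact Real.sqrt_nonneg _
  by_cases hex : ∃ x : H, normA A x = 1
  · obtain ⟨x₀, hx₀⟩ := hex
    have hmemP : ∀ x : H, normA A x = 1 →
        ‖innA A ((T + R) x) x‖ ≤ wA A (T + R) :=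
      fun x hx => le_csSup hBddP ⟨x, hx, rfl⟩
    have hmemM : ∀ x : H, normA A x = 1 →
        ‖innA A ((T - R) x) x‖ ≤ wA A (T - R) :=
      fun x hx => le_csSup hBddM ⟨x, hx, rfl⟩
    have hmemD : ∀ x : H, normA A x = 1 →
        Real.sqrt (‖innA A (T x) x‖ ^ 2 + normA A (T x) ^ 4) ≤ dwA A T :=
      fun x hx => le_csSup hBddD ⟨x, hx, rfl⟩
    have hcle : ∀ x : H, normA A x = 1 →
        cA A (T - R) ≤ ‖innA A ((T - R) x) x‖ :=
      fun x hx => csInf_le hBelowM ⟨x, hx, rfl⟩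
    have hED : ∀ x : H, normA A x = 1 →
        ‖innA A (T x) x‖ ^ 2 + normA A (T x) ^ 4 ≤ dwA A T ^ 2 := by
      intro x hx
      have h1 := hmemD x hx
      have h2 := pow_le_pow_left₀ (Real.sqrt_nonneg _) h1 2
      rwa [Real.sq_sqrt (by positivity)] at h2
    -- upper bound
    have hupper : dwA A T ^ 2 ≤
        (1 / 2) * (wA A (T + R) ^ 2 + wA A (T - R) ^ 2) := by
      have h1 : dwA A T ≤
          Real.sqrt ((1 / 2) * (wA A (T + R) ^ 2 + wA A (T - R) ^ 2)) := by
        apply Real.sSup_le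
        · rintro r ⟨x, hx, rfl⟩
          apply Real.sqrt_le_sqrt
          have hidx := hid x hx
          have hp := hmemP x hx
          have hm := hmemM x hx
          have hp2 : ‖innA A ((T + R) x) x‖ ^ 2 ≤ wA A (T + R) ^ 2 :=
            pow_le_pow_left₀ (norm_nonneg _) hp 2
          have hm2 : ‖innA A ((T - R) x) x‖ ^ 2 ≤ wA A (T - R) ^ 2 :=
            pow_le_pow_left₀ (norm_nonneg _) hm 2
          linarith
        · exact Real.sqrt_nonneg _
      have h2 := pow_le_pow_left₀ hd0 h1 2
      rwa [Real.sq_sqrt (by positivity)] at h2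
    -- lower bound
    have hkey : cA A (T - R) ^ 2 ≤ 2 * dwA A T ^ 2 := by
      have h1 := hcle x₀ hx₀
      have h2 : cA A (T - R) ^ 2 ≤ ‖innA A ((T - R) x₀) x₀‖ ^ 2 :=
        pow_le_pow_left₀ hc0 h1 2
      have h3 := hid x₀ hx₀
      have h4 := hED x₀ hx₀
      have h5 : (0 : ℝ) ≤ ‖innA A ((T + R) x₀) x₀‖ ^ 2 := by positivity
      linarith
    have hlower : wA A (T + R) ≤ Real.sqrt (2 * dwA A T ^ 2 - cA A (T - R) ^ 2) := by
      apply Real.sSup_le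
      · rintro r ⟨x, hx, rfl⟩
        have hax2 : ‖innA A ((T + R) x) x‖ ^ 2
            ≤ 2 * dwA A T ^ 2 - cA A (T - R) ^ 2 := by
          have h1 := hcle x hx
          have h2 : cA A (T - R) ^ 2 ≤ ‖innA A ((T - R) x) x‖ ^ 2 :=
            pow_le_pow_left₀ hc0 h1 2
          have h3 := hid x hx
          have h4 := hED x hx
          linarith
        have h5 := Real.sqrt_le_sqrt hax2
        rwa [Real.sqrt_sq (norm_nonneg _)] at h5
      · exact Real.sqrt_nonneg _
    have h6 := pow_le_pow_left₀ hwp0 hlower 2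
    rw [Real.sq_sqrt (by linarith)] at h6
    constructor
    · linarith
    · linarith
  · -- the unit A-sphere is empty: everything is 0
    have hP : {r : ℝ | ∃ x, normA A x = 1 ∧
        r = ‖innA A ((T + R) x) x‖} = ∅ := by
      ext r
      simp only [Set.mem_setOf_eq, Set.mem_empty_iff_false, iff_false]
      rintro ⟨x, hx, -⟩
      exact hex ⟨x, hx⟩
    have hM : {r : ℝ | ∃ x, normA A x = 1 ∧
        r = ‖innA A ((T - R) x) x‖} = ∅ := by
      ext r
      simp only [Set.mem_setOf_eq, Set.mem_empty_iff_false, iff_false]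
      rintro ⟨x, hx, -⟩
      exact hex ⟨x, hx⟩
    have hD : {r : ℝ | ∃ x, normA A x = 1 ∧
        r = Real.sqrt (‖innA A (T x) x‖ ^ 2 + normA A (T x) ^ 4)} = ∅ := by
      ext r
      simp only [Set.mem_setOf_eq, Set.mem_empty_iff_false, iff_false]
      rintro ⟨x, hx, -⟩
      exact hex ⟨x, hx⟩
    have e1 : wA A (T + R) = 0 := by rw [wA, hP, Real.sSup_empty]
    have e2 : wA A (T - R) = 0 := by rw [wA, hM, Real.sSup_empty]
    have e3 : cA A (T - R) = 0 := by rw [cA, hM, Real.sInf_empty]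
    have e4 : dwA A T = 0 := by rw [dwA, hD, Real.sSup_empty]
    rw [e1, e2, e3, e4]
    norm_num
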